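/- (Lemma 7.3) Every quadruple of integers (i, j, k, ℓ) with i + j + k + ℓ = 0 can be transformed, by a permutation of its four entries possibly followed by a simultaneous sign change of all four entries, into a quadruple (i′, j′, k′, ℓ′) with ℓ′ = −(i′ + j′ + k′) satisfying either Case 1: i′ ≥ 0, j′ ≥ 0, k′ ≥ 0; or Case 2: i′ ≤ 0, j′ ≥ 0, k′ ≥ 0, i′ + j′ ≤ 0, i′ + k′ ≤ 0, i′ + j′ + k′ ≥ 0. -/

import Mathlib

open scoped BigOperators

/-- Cycle sending 0↦1,1↦2,2↦3,3↦0. -/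
def permA : Equiv.Perm (Fin 4) := ⟨![1,2,3,0], ![3,0,1,2], by decide, by decide⟩

/-- Permutation 0↦0,1↦2,2↦3,3↦1. -/
def permB : Equiv.Perm (Fin 4) := ⟨![0,2,3,1], ![0,3,1,2], by decide, by decide⟩

/-- Permutation 0↦3,1↦0,2↦1,3↦2. -/
def permC : Equiv.Perm (Fin 4) := ⟨![3,0,1,2], ![1,2,3,0], by decide, by decide⟩

/-- Lemma 7.3: every quadruple of integers summing to zero can be brought, by
a permutation of its entries possibly followed by a simultaneous sign change,
to a quadruple `(i′, j′, k′, ℓ′)` with `ℓ′ = −(i′+j′+k′)` satisfying either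
Case 1: `i′, j′, k′ ≥ 0`, or
Case 2: `i′ ≤ 0`, `j′, k′ ≥ 0`, `i′+j′ ≤ 0`, `i′+k′ ≤ 0`, `i′+j′+k′ ≥ 0`. -/
theorem quadruple_normal_form (v : Fin 4 → ℤ) (hv : ∑ i, v i = 0) :
    ∃ (σ : Equiv.Perm (Fin 4)) (e : ℤ), (e = 1 ∨ e = -1) ∧
      e * v (σ 3) = -(e * v (σ 0) + e * v (σ 1) + e * v (σ 2)) ∧
      ((0 ≤ e * v (σ 0) ∧ 0 ≤ e * v (σ 1) ∧ 0 ≤ e * v (σ 2)) ∨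
       (e * v (σ 0) ≤ 0 ∧ 0 ≤ e * v (σ 1) ∧ 0 ≤ e * v (σ 2) ∧
        e * v (σ 0) + e * v (σ 1) ≤ 0 ∧ e * v (σ 0) + e * v (σ 2) ≤ 0 ∧
        0 ≤ e * v (σ 0) + e * v (σ 1) + e * v (σ 2))) := by
  set τ := Tuple.sort v with hτ
  have hmono := Tuple.monotone_sort v
  have hab : v (τ 0) ≤ v (τ 1) := hmono (by decide : (0:Fin 4) ≤ 1)
  have hbc : v (τ 1) ≤ v (τ 2) := hmono (by decide : (1:Fin 4) ≤ 2)
  have hcd : v (τ 2) ≤ v (τ 3) := hmono (by decide : (2:Fin 4) ≤ 3)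
  have hsum : v (τ 0) + v (τ 1) + v (τ 2) + v (τ 3) = 0 := by
    have h := Equiv.sum_comp τ v
    rw [hv, Fin.sum_univ_four] at h
    exact h
  by_cases h1 : 0 ≤ v (τ 1)
  · -- b,c,d ≥ 0 : Case 1 with order (b,c,d,a)
    refine ⟨permA.trans τ, 1, Or.inl rfl, ?_, Or.inl ?_⟩
    · simp only [Equiv.trans_apply, permA, Equiv.coe_fn_mk, Matrix.cons_val]
      norm_num
      linarith
    · simp only [Equiv.trans_apply, permA, Equiv.coe_fn_mk, Matrix.cons_val]
      norm_num
      refine ⟨h1, le_trans h1 hbc, le_trans (le_trans h1 hbc) hcd⟩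
  · by_cases h2 : v (τ 2) ≤ 0
    · -- a,b,c ≤ 0 : Case 1 with e = -1, identity order
      refine ⟨τ, -1, Or.inr rfl, ?_, Or.inl ?_⟩
      · linarith
      · refine ⟨?_, ?_, ?_⟩ <;> nlinarith
    · push_neg at h1 h2
      by_cases h3 : v (τ 3) ≤ -(v (τ 0))
      · -- e = 1, order (a, c, d, b) : Case 2
        refine ⟨permB.trans τ, 1, Or.inl rfl, ?_, Or.inr ?_⟩
        · simp only [Equiv.trans_apply, permB, Equiv.coe_fn_mk, Matrix.cons_val]
          norm_num
          linarith
        · simp only [Equiv.trans_apply, permB, Equiv.coe_fn_mk, Matrix.cons_val]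
          norm_num
          refine ⟨by linarith, by linarith, by linarith, by linarith, by linarith, by linarith⟩
      · push_neg at h3
        -- e = -1, order (-d, -a, -b, -c) : Case 2
        refine ⟨permC.trans τ, -1, Or.inr rfl, ?_, Or.inr ?_⟩
        · simp only [Equiv.trans_apply, permC, Equiv.coe_fn_mk, Matrix.cons_val]
          norm_num
          linarith
        · simp only [Equiv.trans_apply, permC, Equiv.coe_fn_mk, Matrix.cons_val]
          norm_num
          refine ⟨by linarith, by linarith, by linarith, by linarith, by linarith, by linarith⟩
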